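/- arXiv:2006.02882 — 3 statements merged into one kernel-verified Lean document; each statement's English description precedes it below -/
import Mathlib

section
/- Let x = ⟨n_1, n_2, n_3, ...⟩ ∈ (0,1] and let T be the map T(x) = 2^i x - 1 for x ∈ (1/2^i, 1/2^{i-1}]. Then for all k ≥ 1, T^{k-1}(x) ∈ (1/2^i, 1/2^{i-1}] if and only if n_k = i. -/
noncomputable def repVal (n : ℕ → ℕ+) : ℝ :=
  ∑' k : ℕ, ((2:ℝ)⁻¹) ^ (∑ j ∈ Finset.range (k + 1), (n j : ℕ))

lemma repVal.S_ge (n : ℕ → ℕ+) (k : ℕ) :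
    k + 1 ≤ ∑ j ∈ Finset.range (k + 1), (n j : ℕ) := by
  calc k + 1 = ∑ j ∈ Finset.range (k + 1), 1 := by simp
    _ ≤ _ := Finset.sum_le_sum fun j _ => (n j).one_le

lemma repVal.summable (n : ℕ → ℕ+) :
    Summable (fun k : ℕ => ((2:ℝ)⁻¹) ^ (∑ j ∈ Finset.range (k + 1), (n j : ℕ))) := by
  refine Summable.of_nonneg_of_le (fun k => by positivity) (fun k => ?_)
    ((summable_geometric_of_lt_one (by norm_num : (0:ℝ) ≤ 2⁻¹) (by norm_num)).mul_left (2:ℝ)⁻¹)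
  calc ((2:ℝ)⁻¹) ^ (∑ j ∈ Finset.range (k + 1), (n j : ℕ))
      ≤ ((2:ℝ)⁻¹) ^ (k + 1) :=
        pow_le_pow_of_le_one (by norm_num) (by norm_num) (repVal.S_ge n k)
    _ = 2⁻¹ * (2:ℝ)⁻¹ ^ k := by ring

lemma repVal.pos (n : ℕ → ℕ+) : 0 < repVal n :=
  Summable.tsum_pos (repVal.summable n) (fun k => by positivity) 0 (by positivity)

lemma repVal.le_one (n : ℕ → ℕ+) : repVal n ≤ 1 := by
  have h := Summable.tsum_le_tsum (f := fun k : ℕ => ((2:ℝ)⁻¹) ^ (∑ j ∈ Finset.range (k + 1), (n j : ℕ)))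
    (g := fun k : ℕ => (2:ℝ)⁻¹ * (2:ℝ)⁻¹ ^ k)
    (fun k => by
      calc ((2:ℝ)⁻¹) ^ (∑ j ∈ Finset.range (k + 1), (n j : ℕ))
          ≤ ((2:ℝ)⁻¹) ^ (k + 1) :=
            pow_le_pow_of_le_one (by norm_num) (by norm_num) (repVal.S_ge n k)
        _ = 2⁻¹ * (2:ℝ)⁻¹ ^ k := by ring)
    (repVal.summable n)
    ((summable_geometric_of_lt_one (by norm_num : (0:ℝ) ≤ 2⁻¹) (by norm_num)).mul_left (2:ℝ)⁻¹)
  calc repVal n ≤ ∑' k : ℕ, (2:ℝ)⁻¹ * (2:ℝ)⁻¹ ^ k := h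
    _ = (2:ℝ)⁻¹ * (1 - 2⁻¹)⁻¹ := by
        rw [tsum_mul_left, tsum_geometric_of_lt_one (by norm_num) (by norm_num)]
    _ = 1 := by norm_num

lemma repVal.shift (n : ℕ → ℕ+) :
    repVal n = (2:ℝ)⁻¹ ^ (n 0 : ℕ) * (1 + repVal (fun k => n (k + 1))) := by
  unfold repVal
  rw [Summable.tsum_eq_zero_add (repVal.summable n)]
  have h : ∀ k : ℕ, ((2:ℝ)⁻¹) ^ (∑ j ∈ Finset.range (k + 1 + 1), (n j : ℕ))
      = (2:ℝ)⁻¹ ^ (n 0 : ℕ) * ((2:ℝ)⁻¹) ^ (∑ j ∈ Finset.range (k + 1), ((fun k => n (k+1)) j : ℕ)) := by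
    intro k
    rw [Finset.sum_range_succ' (fun j => (n j : ℕ)) (k + 1), pow_add, mul_comm]
  rw [tsum_congr h, tsum_mul_left]
  simp [mul_add]

lemma repVal.mem_Ioc (n : ℕ → ℕ+) (i : ℕ) :
    repVal n ∈ Set.Ioc (((2:ℝ) ^ (i + 1))⁻¹) (((2:ℝ) ^ i)⁻¹) ↔ (n 0 : ℕ) = i + 1 := by
  obtain ⟨m, hm⟩ : ∃ m, (n 0 : ℕ) = m + 1 := ⟨(n 0 : ℕ) - 1, by have := (n 0).pos; omega⟩
  have hc : (0:ℝ) < (2:ℝ)⁻¹ ^ (m + 1) := by positivity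
  have hr0 := repVal.pos (fun k => n (k + 1))
  have hr1 := repVal.le_one (fun k => n (k + 1))
  have hrep := repVal.shift n
  rw [hm] at hrep
  have hlow : (2:ℝ)⁻¹ ^ (m + 1) < repVal n := by rw [hrep]; nlinarith
  have hhigh : repVal n ≤ (2:ℝ)⁻¹ ^ m := by
    have : (2:ℝ)⁻¹ ^ (m + 1) = (2:ℝ)⁻¹ ^ m * 2⁻¹ := pow_succ _ _
    have hm0 : (0:ℝ) < (2:ℝ)⁻¹ ^ m := by positivity
    rw [hrep]
    nlinarith
  constructor
  · rintro ⟨h1, h2⟩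
    rw [← inv_pow] at h1 h2
    have e1 : m < i + 1 := (pow_lt_pow_iff_right_of_lt_one₀ (by norm_num : (0:ℝ) < 2⁻¹)
      (by norm_num)).mp (lt_of_lt_of_le h1 hhigh)
    have e2 : i < m + 1 := (pow_lt_pow_iff_right_of_lt_one₀ (by norm_num : (0:ℝ) < 2⁻¹)
      (by norm_num)).mp (lt_of_lt_of_le hlow h2)
    omega
  · intro h
    have : m = i := by omega
    subst this
    exact ⟨by rw [inv_pow] at hlow; exact hlow, by rw [inv_pow] at hhigh; exact hhigh⟩

/-- For `x = ⟨n₁,n₂,…⟩` and `T x = 2^i x - 1` on `(1/2^i, 1/2^{i-1}]`: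
`T^{k-1}(x) ∈ (1/2^i, 1/2^{i-1}]` iff `n_k = i` (here digits and iterates are 0-indexed,
so `k-1` becomes `k` and the digit `n_k` becomes `n k`). -/
theorem iterate_mem_interval_iff_digit (T : ℝ → ℝ)
    (hT : ∀ i : ℕ, ∀ x ∈ Set.Ioc (((2:ℝ) ^ (i + 1))⁻¹) (((2:ℝ) ^ i)⁻¹),
      T x = 2 ^ (i + 1) * x - 1) :
    ∀ n : ℕ → ℕ+, ∀ k : ℕ, ∀ i : ℕ,
      (T^[k] (repVal n) ∈ Set.Ioc (((2:ℝ) ^ (i + 1))⁻¹) (((2:ℝ) ^ i)⁻¹)) ↔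
        (n k : ℕ) = i + 1 := by

  have step : ∀ n : ℕ → ℕ+, T (repVal n) = repVal (fun k => n (k + 1)) := by
    intro n
    obtain ⟨m, hm⟩ : ∃ m, (n 0 : ℕ) = m + 1 := ⟨(n 0 : ℕ) - 1, by have := (n 0).pos; omega⟩
    have hmem := (repVal.mem_Ioc n m).mpr hm
    rw [hT m _ hmem, repVal.shift n, hm, inv_pow, mul_inv_cancel_left₀ (by positivity)]
    ring
  intro n k
  induction k generalizing n with
  | zero => intro i; simpa using repVal.mem_Ioc n i
  | succ k ih =>
    intro i
    rw [Function.iterate_succ_apply, step n]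
    exact ih (fun k => n (k + 1)) i
end

section
/- Lebesgue measure on (0,1] is ergodic with respect to the map T defined by T(x) = 2^i x - 1 for x ∈ (1/2^i, 1/2^{i-1}]: every Borel set B ⊆ (0,1] with T^{-1}(B) = B (up to measure zero) has Lebesgue measure 0 or 1. -/
open MeasureTheory
open scoped symmDiff ENNReal

namespace TErgAux

def J (i : ℕ) : Set ℝ := Set.Ioc (((2:ℝ) ^ (i+1))⁻¹) (((2:ℝ) ^ i)⁻¹)

lemma exists_mem_J {x : ℝ} (hx : x ∈ Set.Ioc (0:ℝ) 1) : ∃ i : ℕ, x ∈ J i := by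
  classical
  obtain ⟨hx0, hx1⟩ := hx
  have h : ∃ n : ℕ, ((2:ℝ)^n)⁻¹ < x := by
    obtain ⟨n, hn⟩ := exists_pow_lt_of_lt_one hx0 (by norm_num : (1/2:ℝ) < 1)
    refine ⟨n, ?_⟩
    rwa [one_div, inv_pow] at hn
  have hn : ((2:ℝ) ^ (Nat.find h))⁻¹ < x := Nat.find_spec h
  have h0 : Nat.find h ≠ 0 := by
    intro h0
    rw [h0] at hn
    norm_num at hn
    linarith
  obtain ⟨m, hm⟩ := Nat.exists_eq_succ_of_ne_zero h0
  rw [hm] at hn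
  refine ⟨m, hn, ?_⟩
  have hmin := Nat.find_min h (m := m) (by omega)
  exact le_of_not_gt hmin

lemma vol_preimage_affine {c : ℝ} (hc : 0 < c) (S : Set ℝ) :
    volume ((fun x => c * x - 1) ⁻¹' S) = (ENNReal.ofReal c)⁻¹ * volume S := by
  have hs : (fun x : ℝ => c * x - 1) ⁻¹' S = (c * ·) ⁻¹' ((· + (-1)) ⁻¹' S) := by
    ext x; simp [sub_eq_add_neg]
  rw [hs, Real.volume_preimage_mul_left (ne_of_gt hc), measure_preimage_add_right]
  congr 1
  rw [abs_inv, abs_of_pos hc, ENNReal.ofReal_inv_of_pos hc]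

def fmap (i : ℕ) (x : ℝ) : ℝ := 2 ^ (i+1) * x - 1

noncomputable def Fv (B : Set ℝ) (t : ℝ) : ENNReal := volume (B ∩ Set.Ioc 0 t)

end TErgAux

open TErgAux

/-- Lebesgue measure on `(0,1]` is ergodic for `T x = 2^i x - 1` on `(1/2^i, 1/2^{i-1}]`:
any Borel `B ⊆ Set.Ioc 0 1` that is invariant up to measure zero has measure `0` or `1`. -/
theorem T_ergodic (T : ℝ → ℝ)
    (hT : ∀ i : ℕ, ∀ x ∈ Set.Ioc (((2:ℝ) ^ (i + 1))⁻¹) (((2:ℝ) ^ i)⁻¹),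
      T x = 2 ^ (i + 1) * x - 1) :
    ∀ B ⊆ Set.Ioc (0:ℝ) 1, MeasurableSet B →
      volume ((T ⁻¹' B ∩ Set.Ioc (0:ℝ) 1) ∆ B) = 0 →
      volume B = 0 ∨ volume B = 1 := by
  intro B hBsub hBm hsym
  set b : ENNReal := volume B with hbdef
  have hb1 : b ≤ 1 := by
    have := measure_mono hBsub (μ := volume)
    simpa using this
  have hbne : b ≠ ⊤ := (lt_of_le_of_lt hb1 (by norm_num)).ne
  have hae : ((T ⁻¹' B ∩ Set.Ioc (0:ℝ) 1 : Set ℝ) : Set ℝ) =ᵐ[volume] B :=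
    measure_symmDiff_eq_zero_iff.mp hsym
  -- the affine branch maps
  have hpi : ∀ i : ℕ, (0:ℝ) < 2 ^ i := fun i => by positivity
  -- exact set identity
  have hIoc01 : ∀ i : ℕ, ∀ x ∈ J i, x ∈ Set.Ioc (0:ℝ) 1 := by
    intro i x hx
    obtain ⟨h1, h2⟩ := hx
    constructor
    · exact lt_trans (by positivity) h1
    · calc x ≤ ((2:ℝ)^i)⁻¹ := h2
        _ ≤ 1 := by
          rw [inv_le_one_iff₀]
          right; exact one_le_pow₀ (by norm_num)
  have hset : ∀ i : ℕ, (T ⁻¹' B ∩ Set.Ioc (0:ℝ) 1) ∩ J i = fmap i ⁻¹' B := by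
    intro i
    ext x
    simp only [Set.mem_inter_iff, Set.mem_preimage, fmap]
    constructor
    · rintro ⟨⟨hxB, _⟩, hxJ⟩
      rwa [hT i x hxJ] at hxB
    · intro hx
      have hmem := hBsub hx
      obtain ⟨h1, h2⟩ := hmem
      have hxJ : x ∈ J i := by
        constructor
        · rw [inv_eq_one_div, div_lt_iff₀ (hpi (i+1))]
          nlinarith [hpi (i+1)]
        · rw [inv_eq_one_div, le_div_iff₀ (hpi i)]
          have : (2:ℝ)^(i+1) = 2^i * 2 := by ring
          nlinarith [hpi i]
      exact ⟨⟨by rwa [hT i x hxJ], hIoc01 i x hxJ⟩, hxJ⟩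
  -- a.e. identity for each branch
  have hpre : ∀ i : ℕ, ((fmap i ⁻¹' B : Set ℝ) : Set ℝ) =ᵐ[volume] (B ∩ J i : Set ℝ) := by
    intro i
    have h := ae_eq_set_inter hae (ae_eq_refl (J i))
    rwa [hset i] at h
  have hFle : ∀ t : ℝ, Fv B t ≤ b := fun t => measure_mono Set.inter_subset_left
  have hFne : ∀ t : ℝ, Fv B t ≠ ⊤ := fun t =>
    (lt_of_le_of_lt (le_trans (hFle t) hb1) (by norm_num)).ne
  have F1 : Fv B 1 = b := by
    unfold Fv
    rw [Set.inter_eq_left.mpr hBsub]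
  -- the functional equation
  have key : ∀ i : ℕ, ∀ t ∈ J i,
      Fv B t = Fv B (((2:ℝ)^(i+1))⁻¹) + ((2:ℝ≥0∞)^(i+1))⁻¹ * Fv B (2^(i+1)*t - 1) := by
    intro i t ht
    obtain ⟨ht1, ht2⟩ := ht
    have ha0 : (0:ℝ) ≤ ((2:ℝ)^(i+1))⁻¹ := by positivity
    have hsplit : Set.Ioc (0:ℝ) t
        = Set.Ioc 0 (((2:ℝ)^(i+1))⁻¹) ∪ Set.Ioc (((2:ℝ)^(i+1))⁻¹) t :=
      (Set.Ioc_union_Ioc_eq_Ioc ha0 (le_of_lt ht1)).symm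
    have hdisj : Disjoint (B ∩ Set.Ioc 0 (((2:ℝ)^(i+1))⁻¹))
        (B ∩ Set.Ioc (((2:ℝ)^(i+1))⁻¹) t) :=
      (Set.Ioc_disjoint_Ioc_of_le le_rfl).mono Set.inter_subset_right Set.inter_subset_right
    have hm2 : MeasurableSet (B ∩ Set.Ioc (((2:ℝ)^(i+1))⁻¹) t) := hBm.inter measurableSet_Ioc
    have h1 : Fv B t = Fv B (((2:ℝ)^(i+1))⁻¹) + volume (B ∩ Set.Ioc (((2:ℝ)^(i+1))⁻¹) t) := by
      unfold Fv
      rw [hsplit, Set.inter_union_distrib_left, measure_union hdisj hm2]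
    rw [h1]
    congr 1
    have e1 : B ∩ Set.Ioc (((2:ℝ)^(i+1))⁻¹) t = (B ∩ J i) ∩ Set.Iic t := by
      rw [Set.inter_assoc]
      congr 1
      unfold J
      rw [Set.Ioc_inter_Iic, min_eq_right ht2]
    have e2 : ((B ∩ J i) ∩ Set.Iic t : Set ℝ) =ᵐ[volume] ((fmap i ⁻¹' B) ∩ Set.Iic t : Set ℝ) :=
      ae_eq_set_inter (hpre i).symm (ae_eq_refl _)
    have e3 : (fmap i ⁻¹' B) ∩ Set.Iic t
        = (fun x => (2:ℝ)^(i+1) * x - 1) ⁻¹' (B ∩ Set.Ioc 0 (2^(i+1)*t - 1)) := by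
      ext x
      simp only [Set.mem_inter_iff, Set.mem_preimage, Set.mem_Iic, fmap, Set.mem_Ioc]
      constructor
      · rintro ⟨hxB, hxt⟩
        exact ⟨hxB, (hBsub hxB).1, by nlinarith [hpi (i+1)]⟩
      · rintro ⟨hxB, _, hxt⟩
        exact ⟨hxB, by nlinarith [hpi (i+1)]⟩
    have hq : ENNReal.ofReal ((2:ℝ)^(i+1)) = (2:ℝ≥0∞)^(i+1) := by
      rw [ENNReal.ofReal_pow (by norm_num)]
      norm_num
    rw [e1, measure_congr e2, e3, vol_preimage_affine (hpi (i+1)), hq]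
    rfl
  -- value on dyadic points
  have hpow : ∀ k : ℕ, Fv B (((2:ℝ)^k)⁻¹) = b * ((2:ℝ≥0∞)^k)⁻¹ := by
    intro k
    induction k with
    | zero => simpa using F1
    | succ k ih =>
      have hlt : (2:ℝ)^k < 2^(k+1) := by
        rw [pow_succ]; nlinarith [hpi k]
      have hmem : ((2:ℝ)^k)⁻¹ ∈ J k := ⟨by
        apply inv_strictAnti₀ (hpi k) hlt, le_refl _⟩
      have h := key k _ hmem
      have hs : (2:ℝ)^(k+1) * ((2:ℝ)^k)⁻¹ - 1 = 1 := by
        rw [pow_succ]; field_simp; norm_num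
      rw [hs, F1, ih] at h
      have hX : ((2:ℝ≥0∞)^(k+1))⁻¹ * b ≠ ⊤ := ENNReal.mul_ne_top (by simp) hbne
      have hcalc : b * ((2:ℝ≥0∞)^k)⁻¹
          = b * ((2:ℝ≥0∞)^(k+1))⁻¹ + ((2:ℝ≥0∞)^(k+1))⁻¹ * b := by
        rw [mul_comm (((2:ℝ≥0∞)^(k+1))⁻¹) b, ← mul_add]
        congr 1
        rw [pow_succ, ENNReal.mul_inv (Or.inl (by simp)) (Or.inl (by simp)), ← mul_add,
          ENNReal.inv_two_add_inv_two, mul_one]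
      rw [hcalc] at h
      exact (WithTop.add_right_cancel hX h).symm
  -- |F t - b t| ≤ (1/2)^n
  have habs : ∀ n : ℕ, ∀ t ∈ Set.Ioc (0:ℝ) 1,
      |(Fv B t).toReal - b.toReal * t| ≤ (1/2:ℝ)^n := by
    intro n
    induction n with
    | zero =>
      intro t ht
      have hble : b.toReal ≤ 1 := by
        calc b.toReal ≤ (1:ℝ≥0∞).toReal := ENNReal.toReal_mono (by norm_num) hb1
          _ = 1 := by simp
      have h1 : (Fv B t).toReal ≤ 1 := by
        calc (Fv B t).toReal ≤ (1:ℝ≥0∞).toReal :=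
            ENNReal.toReal_mono (by norm_num) (le_trans (hFle t) hb1)
          _ = 1 := by simp
      have h2 : (0:ℝ) ≤ (Fv B t).toReal := ENNReal.toReal_nonneg
      have h3 : (0:ℝ) ≤ b.toReal * t := mul_nonneg ENNReal.toReal_nonneg (le_of_lt ht.1)
      have h4 : b.toReal * t ≤ 1 := by nlinarith [ht.2, ht.1]
      rw [abs_le]
      norm_num
      constructor <;> linarith
    | succ n ih =>
      intro t ht
      obtain ⟨i, hti⟩ := exists_mem_J ht
      have hc0 : ((2:ℝ)^(i+1)) ≠ 0 := ne_of_gt (hpi (i+1))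
      have hs01 : (2:ℝ)^(i+1) * t - 1 ∈ Set.Ioc (0:ℝ) 1 := by
        obtain ⟨h1, h2⟩ := hti
        rw [inv_eq_one_div, div_lt_iff₀ (hpi (i+1))] at h1
        rw [inv_eq_one_div, le_div_iff₀ (hpi i)] at h2
        have hp : (2:ℝ)^(i+1) = 2^i*2 := by ring
        have h2' : (2:ℝ)^(i+1) * t ≤ 2 := by rw [hp]; nlinarith
        constructor
        · nlinarith
        · linarith
      have heq := key i t hti
      rw [hpow (i+1)] at heq
      have htoReal : (((2:ℝ≥0∞)^(i+1))⁻¹).toReal = ((2:ℝ)^(i+1))⁻¹ := by simp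
      have hrt : (Fv B t).toReal
          = b.toReal * ((2:ℝ)^(i+1))⁻¹
            + ((2:ℝ)^(i+1))⁻¹ * (Fv B ((2:ℝ)^(i+1)*t-1)).toReal := by
        rw [heq, ENNReal.toReal_add (ENNReal.mul_ne_top hbne (by simp))
            (ENNReal.mul_ne_top (by simp) (hFne _)),
          ENNReal.toReal_mul, ENNReal.toReal_mul, htoReal]
      have hdiff : (Fv B t).toReal - b.toReal * t
          = ((Fv B ((2:ℝ)^(i+1)*t-1)).toReal - b.toReal * ((2:ℝ)^(i+1)*t-1))
              * ((2:ℝ)^(i+1))⁻¹ := by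
        rw [hrt]
        field_simp
        ring
      have hbound := ih _ hs01
      rw [hdiff, abs_mul]
      have h2le : (2:ℝ) ≤ 2^(i+1) := by
        calc (2:ℝ) = 2^1 := (pow_one 2).symm
          _ ≤ 2^(i+1) := pow_le_pow_right₀ (by norm_num) (by omega)
      have hc2 : |((2:ℝ)^(i+1))⁻¹| ≤ 1/2 := by
        rw [abs_of_pos (by positivity), one_div]
        exact inv_anti₀ (by norm_num) h2le
      rw [pow_succ]
      exact mul_le_mul hbound hc2 (abs_nonneg _) (pow_nonneg (by norm_num) n)
  -- hence F t = b * t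
  have hFt : ∀ t ∈ Set.Ioc (0:ℝ) 1, Fv B t = b * ENNReal.ofReal t := by
    intro t ht
    have h0 : (Fv B t).toReal = b.toReal * t := by
      by_contra hne
      have hpos : 0 < |(Fv B t).toReal - b.toReal * t| := abs_pos.mpr (sub_ne_zero.mpr hne)
      obtain ⟨n, hn⟩ := exists_pow_lt_of_lt_one hpos (by norm_num : (1/2:ℝ) < 1)
      exact absurd (habs n t ht) (not_le.mpr hn)
    rw [← ENNReal.ofReal_toReal (hFne t), h0,
      ENNReal.ofReal_mul ENNReal.toReal_nonneg, ENNReal.ofReal_toReal hbne]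
  -- the restricted measures agree
  have hfin : IsFiniteMeasure (volume.restrict B) := by
    constructor
    rw [Measure.restrict_apply_univ]
    exact lt_of_le_of_lt hb1 (by norm_num)
  have hmain : volume.restrict B = b • volume.restrict (Set.Ioc (0:ℝ) 1) := by
    refine Measure.ext_of_Iic _ _ (fun a => ?_)
    rw [Measure.restrict_apply measurableSet_Iic, Measure.smul_apply,
      Measure.restrict_apply measurableSet_Iic, smul_eq_mul]
    by_cases ha : a ≤ 0
    · have e1 : Set.Iic a ∩ B = ∅ := by
        ext x
        simp only [Set.mem_inter_iff, Set.mem_Iic, Set.mem_empty_iff_false, iff_false, not_and]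
        intro hxa hxB
        exact absurd (hBsub hxB).1 (by linarith)
      have e2 : Set.Iic a ∩ Set.Ioc (0:ℝ) 1 = ∅ := by
        ext x
        simp only [Set.mem_inter_iff, Set.mem_Iic, Set.mem_Ioc, Set.mem_empty_iff_false,
          iff_false, not_and]
        intro hxa hx
        linarith [hx]
      rw [e1, e2]
      simp
    · push_neg at ha
      have ha'mem : min a 1 ∈ Set.Ioc (0:ℝ) 1 := ⟨lt_min ha one_pos, min_le_right _ _⟩
      have e1 : Set.Iic a ∩ B = B ∩ Set.Ioc 0 (min a 1) := by
        ext x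
        simp only [Set.mem_inter_iff, Set.mem_Iic, Set.mem_Ioc]
        constructor
        · rintro ⟨hxa, hxB⟩
          exact ⟨hxB, (hBsub hxB).1, le_min hxa (hBsub hxB).2⟩
        · rintro ⟨hxB, _, hxa⟩
          exact ⟨le_trans hxa (min_le_left _ _), hxB⟩
      have e2 : Set.Iic a ∩ Set.Ioc (0:ℝ) 1 = Set.Ioc 0 (min a 1) := by
        ext x
        simp only [Set.mem_inter_iff, Set.mem_Iic, Set.mem_Ioc]
        constructor
        · rintro ⟨hxa, hx0, hx1⟩
          exact ⟨hx0, le_min hxa hx1⟩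
        · rintro ⟨hx0, hxa⟩
          exact ⟨le_trans hxa (min_le_left _ _), hx0, le_trans hxa (min_le_right _ _)⟩
      have e3 := hFt (min a 1) ha'mem
      unfold Fv at e3
      rw [e1, e2, e3, Real.volume_Ioc, sub_zero]
  -- conclude b = b * b
  have h1 : (volume.restrict B) B = b := by
    rw [Measure.restrict_apply hBm, Set.inter_self]
  have h2 : (b • volume.restrict (Set.Ioc (0:ℝ) 1)) B = b * b := by
    rw [Measure.smul_apply, Measure.restrict_apply hBm, smul_eq_mul,
      Set.inter_eq_left.mpr hBsub]
  have hbb : b = b * b := by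
    conv_lhs => rw [← h1, hmain]
    exact h2
  have hbr : b.toReal = b.toReal * b.toReal := by
    conv_lhs => rw [hbb]
    rw [ENNReal.toReal_mul]
  have hfac : b.toReal * (1 - b.toReal) = 0 := by
    rw [mul_sub, mul_one]
    linarith
  rcases mul_eq_zero.mp hfac with h | h
  · left
    rcases ENNReal.toReal_eq_zero_iff b |>.mp h with h' | h'
    · exact h'
    · exact absurd h' hbne
  · right
    have : b.toReal = 1 := by linarith
    exact ENNReal.toReal_eq_one_iff b |>.mp this
end

section
/- For Lebesgue-almost all x = ⟨n_1, n_2, n_3, ...⟩ ∈ (0,1], the geometric mean of the digits converges to Somos' constant: lim_{i→∞} (n_1 n_2 ⋯ n_i)^{1/i} = σ, where σ = Π_{i=1}^∞ i^{1/2^i}. -/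
open MeasureTheory Filter Real Topology

/-- Somos' constant `σ = ∏_{i=1}^∞ i^{1/2^i}` (indexed from 0: factor `(i+1)^{1/2^{i+1}}`). -/
noncomputable def somos : ℝ := ∏' i : ℕ, ((i : ℝ) + 1) ^ (((2:ℝ) ^ (i + 1))⁻¹)

namespace SomosAux

noncomputable def d0 (x : ℝ) : ℕ+ := (⌊Real.logb 2 x⁻¹⌋₊).succPNat

noncomputable def T (x : ℝ) : ℝ := 2 ^ (d0 x : ℕ) * x - 1

noncomputable def dig (k : ℕ) (x : ℝ) : ℕ+ := d0 (T^[k] x)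

def piece (n : ℕ+) : Set ℝ := Set.Ioc ((2:ℝ) ^ (-(n:ℤ))) ((2:ℝ) ^ (1 - (n:ℤ)))

lemma piece_subset (n : ℕ+) : piece n ⊆ Set.Ioc (0:ℝ) 1 := by
  intro x hx
  obtain ⟨h1, h2⟩ := hx
  constructor
  · exact lt_trans (zpow_pos (by norm_num) _) h1
  · refine le_trans h2 ?_
    have : (1 - (n:ℤ)) ≤ 0 := by
      have := n.one_le
      have : (1:ℤ) ≤ (n:ℤ) := by exact_mod_cast this
      omega
    exact zpow_le_one_of_nonpos₀ (by norm_num) this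

lemma mem_piece_d0 {x : ℝ} (hx : x ∈ Set.Ioc (0:ℝ) 1) : x ∈ piece (d0 x) := by
  obtain ⟨hx0, hx1⟩ := hx
  have hxinv : (1:ℝ) ≤ x⁻¹ := one_le_inv_iff₀.2 ⟨hx0, hx1⟩
  set y := Real.logb 2 x⁻¹ with hy
  have hy0 : 0 ≤ y := Real.logb_nonneg one_lt_two hxinv
  have hfl : (⌊y⌋₊ : ℝ) ≤ y := Nat.floor_le hy0
  have hfl2 : y < ⌊y⌋₊ + 1 := Nat.lt_floor_add_one y
  have hxeq : x = (2:ℝ) ^ (-y) := by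
    rw [Real.rpow_neg (by norm_num), hy, Real.rpow_logb (by norm_num) (by norm_num) (by positivity), inv_inv]
  have hd : ((d0 x : ℕ) : ℝ) = (⌊y⌋₊ : ℝ) + 1 := by
    simp only [d0, Nat.succPNat, PNat.mk_coe]
    push_cast
    rw [hy]
  constructor
  · have : (2:ℝ) ^ (-(((⌊y⌋₊:ℝ)) + 1)) < 2 ^ (-y) := by
      apply Real.rpow_lt_rpow_left_iff (x := (2:ℝ)) one_lt_two |>.2
      linarith
    rw [← hxeq] at this
    calc (2:ℝ) ^ (-((d0 x : ℕ) : ℤ)) = (2:ℝ) ^ (-(((⌊y⌋₊:ℝ)) + 1)) := by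
          rw [← Real.rpow_intCast]
          push_cast [hd]
          ring_nf
        _ < x := this
  · have : (2:ℝ) ^ (-y) ≤ 2 ^ (-(⌊y⌋₊:ℝ)) := by
      apply Real.rpow_le_rpow_left_iff (x := (2:ℝ)) one_lt_two |>.2
      linarith
    rw [← hxeq] at this
    calc x ≤ (2:ℝ) ^ (-(⌊y⌋₊:ℝ)) := this
      _ = (2:ℝ) ^ (1 - ((d0 x : ℕ) : ℤ)) := by
          rw [← Real.rpow_intCast]
          push_cast [hd]
          ring_nf

lemma piece_disjoint : Pairwise (Function.onFun Disjoint piece) := by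
  intro n m hnm
  wlog h : n < m generalizing n m
  · exact (this hnm.symm (hnm.lt_or_gt.resolve_left h)).symm
  rw [Function.onFun, Set.disjoint_left]
  rintro x ⟨h1, _⟩ ⟨_, h4⟩
  have : (2:ℝ) ^ (1 - (m:ℤ)) ≤ (2:ℝ) ^ (-(n:ℤ)) := by
    apply zpow_le_zpow_right₀ one_le_two
    have : (n:ℤ) < m := by exact_mod_cast h
    omega
  linarith

lemma d0_eq_of_mem_piece {x : ℝ} {n : ℕ+} (h : x ∈ piece n) : d0 x = n := by
  have hx : x ∈ Set.Ioc (0:ℝ) 1 := piece_subset n h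
  by_contra hne
  exact (piece_disjoint hne).le_bot ⟨mem_piece_d0 hx, h⟩ |>.elim



open scoped ENNReal

instance : MeasurableSpace ℕ+ := ⊤
instance : MeasurableSingletonClass ℕ+ := ⟨fun _ => trivial⟩

noncomputable def μ : Measure ℝ := volume.restrict (Set.Ioc (0:ℝ) 1)

lemma measurable_d0 : Measurable d0 := by
  have h1 : Measurable fun x : ℝ => ⌊Real.logb 2 x⁻¹⌋₊ :=
    Nat.measurable_floor.comp ((Real.measurable_log.comp measurable_inv).div measurable_const)
  exact (Measurable.of_discrete (f := Nat.succPNat)).comp h1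

lemma measurable_d0nat : Measurable fun x : ℝ => ((d0 x : ℕ)) :=
  (Measurable.of_discrete (f := fun n : ℕ+ => (n:ℕ))).comp measurable_d0

lemma measurable_T : Measurable T := by
  have : Measurable fun x : ℝ => (2:ℝ) ^ (d0 x : ℕ) :=
    (Measurable.of_discrete (f := fun k : ℕ => (2:ℝ)^k)).comp measurable_d0nat
  exact (this.mul measurable_id).sub measurable_const

lemma measurable_dig (k : ℕ) : Measurable (dig k) :=
  measurable_d0.comp (measurable_T.iterate k)

lemma measurableSet_piece (n : ℕ+) : MeasurableSet (piece n) := measurableSet_Ioc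

lemma mem_piece_iff_g {x : ℝ} (n : ℕ+) :
    x ∈ piece n ↔ 2 ^ (n:ℕ) * x - 1 ∈ Set.Ioc (0:ℝ) 1 := by
  have h2 : (0:ℝ) < 2 ^ (n:ℕ) := by positivity
  have hz : (2:ℝ) ^ (n:ℕ) * (2:ℝ) ^ (-(n:ℤ)) = 1 := by
    rw [← zpow_natCast (2:ℝ) (n:ℕ), ← zpow_add₀ (two_ne_zero)]
    simp
  have hz2 : (2:ℝ) ^ (n:ℕ) * (2:ℝ) ^ (1-(n:ℤ)) = 2 := by
    rw [← zpow_natCast (2:ℝ) (n:ℕ), ← zpow_add₀ (two_ne_zero)]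
    norm_num
  constructor
  · rintro ⟨h1, h4⟩
    constructor
    · nlinarith
    · nlinarith
  · rintro ⟨h1, h4⟩
    constructor
    · nlinarith
    · nlinarith

lemma T_mem {x : ℝ} (hx : x ∈ Set.Ioc (0:ℝ) 1) : T x ∈ Set.Ioc (0:ℝ) 1 := by
  have h := mem_piece_d0 hx
  rw [mem_piece_iff_g] at h
  simpa [T] using h

lemma key (n : ℕ+) {E : Set ℝ} (hE : MeasurableSet E) :
    μ (piece n ∩ T ⁻¹' E) = ENNReal.ofReal ((2:ℝ)^(-(n:ℤ))) * μ E := by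
  have hmeas : MeasurableSet (piece n ∩ T ⁻¹' E) :=
    (measurableSet_piece n).inter (measurable_T hE)
  have hsub : piece n ∩ T ⁻¹' E ⊆ Set.Ioc (0:ℝ) 1 := fun x hx => piece_subset n hx.1
  have hg : piece n ∩ T ⁻¹' E = (fun x : ℝ => 2 ^ (n:ℕ) * x) ⁻¹' ((fun y : ℝ => y + (-1)) ⁻¹' (E ∩ Set.Ioc 0 1)) := by
    ext x
    simp only [Set.mem_inter_iff, Set.mem_preimage]
    constructor
    · rintro ⟨h1, h2⟩
      have hd : d0 x = n := d0_eq_of_mem_piece h1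
      have hT : T x = 2 ^ (n:ℕ) * x - 1 := by rw [T, hd]
      refine ⟨by rw [← sub_eq_add_neg, ← hT]; exact h2, ?_⟩
      rw [← sub_eq_add_neg]
      exact (mem_piece_iff_g n).1 h1
    · rintro ⟨h1, h2⟩
      rw [← sub_eq_add_neg] at h1 h2
      have hp : x ∈ piece n := (mem_piece_iff_g n).2 h2
      have hd : d0 x = n := d0_eq_of_mem_piece hp
      have hT : T x = 2 ^ (n:ℕ) * x - 1 := by rw [T, hd]
      exact ⟨hp, by rw [hT]; exact h1⟩
  have hμvol : μ (piece n ∩ T ⁻¹' E) = volume (piece n ∩ T ⁻¹' E) := by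
    rw [μ, Measure.restrict_apply hmeas, Set.inter_eq_left.2 hsub]
  rw [hμvol, hg]
  rw [show (fun x : ℝ => 2 ^ (n:ℕ) * x) = ((2:ℝ) ^ (n:ℕ) * ·) from rfl,
    Real.volume_preimage_mul_left (by positivity : ((2:ℝ)^(n:ℕ)) ≠ 0),
    measure_preimage_add_right volume (-1) _]
  have : μ E = volume (E ∩ Set.Ioc 0 1) := by rw [μ, Measure.restrict_apply hE]
  rw [this]
  congr 2
  rw [abs_of_pos (by positivity), ← zpow_natCast (2:ℝ) (n:ℕ), ← zpow_neg]

lemma Ioc_eq_iUnion : Set.Ioc (0:ℝ) 1 = ⋃ n : ℕ+, piece n := by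
  ext x
  constructor
  · intro hx
    exact Set.mem_iUnion.2 ⟨d0 x, mem_piece_d0 hx⟩
  · intro hx
    obtain ⟨n, hn⟩ := Set.mem_iUnion.1 hx
    exact piece_subset n hn

lemma tsum_weights : (∑' n : ℕ+, ENNReal.ofReal ((2:ℝ)^(-(n:ℤ)))) = 1 := by
  rw [← Equiv.pnatEquivNat.symm.tsum_eq]
  have h : ∀ k : ℕ, ENNReal.ofReal ((2:ℝ)^(-((Equiv.pnatEquivNat.symm k : ℕ+):ℤ))) = (2:ℝ≥0∞)⁻¹ ^ (k+1) := by
    intro k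
    have : ((Equiv.pnatEquivNat.symm k : ℕ+) : ℤ) = (k:ℤ) + 1 := by
      simp [Equiv.pnatEquivNat, Nat.succPNat]
    rw [this]
    rw [show (-((k:ℤ)+1)) = -((k+1:ℕ):ℤ) by push_cast; ring, zpow_neg, zpow_natCast,
      ← inv_pow, ENNReal.ofReal_pow (by norm_num)]
    congr 1
    rw [ENNReal.ofReal_inv_of_pos (by norm_num)]
    norm_num
  simp_rw [h]
  simp_rw [pow_succ (2:ℝ≥0∞)⁻¹]
  rw [ENNReal.tsum_mul_right, ENNReal.tsum_geometric, ENNReal.one_sub_inv_two, inv_inv]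
  exact ENNReal.mul_inv_cancel two_ne_zero (by norm_num)

lemma μ_eq_volume {A : Set ℝ} (hA : MeasurableSet A) (h : A ⊆ Set.Ioc 0 1) : μ A = volume A := by
  rw [μ, Measure.restrict_apply hA, Set.inter_eq_left.2 h]

instance : IsProbabilityMeasure μ := by
  constructor
  rw [μ, Measure.restrict_apply MeasurableSet.univ, Set.univ_inter, Real.volume_Ioc]
  norm_num

lemma measurePreserving_T : MeasurePreserving T μ μ := by
  refine ⟨measurable_T, ?_⟩
  ext s hs
  rw [Measure.map_apply measurable_T hs]
  have hU : Set.Ioc (0:ℝ) 1 ∩ T ⁻¹' s = ⋃ n : ℕ+, (piece n ∩ T ⁻¹' s) := by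
    rw [← Set.iUnion_inter, ← Ioc_eq_iUnion]
  have e1 : μ (T ⁻¹' s) = μ (⋃ n : ℕ+, (piece n ∩ T ⁻¹' s)) := by
    rw [← hU, μ, Measure.restrict_apply (measurable_T hs),
        Measure.restrict_apply (measurableSet_Ioc.inter (measurable_T hs)),
        Set.inter_comm (Set.Ioc 0 1) (T ⁻¹' s), Set.inter_assoc, Set.inter_self]
  rw [e1, measure_iUnion
    (fun i j hij => ((piece_disjoint hij).mono Set.inter_subset_left Set.inter_subset_left))
    (fun n => (measurableSet_piece n).inter (measurable_T hs))]
  simp_rw [key _ hs]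
  rw [ENNReal.tsum_mul_right, tsum_weights, one_mul]

lemma key2 (s : Set ℕ+) {E : Set ℝ} (hE : MeasurableSet E) :
    μ (d0 ⁻¹' s ∩ T ⁻¹' E) = (∑' a : s, ENNReal.ofReal ((2:ℝ)^(-((a:ℕ+):ℤ)))) * μ E := by
  have hds : MeasurableSet (d0 ⁻¹' s) := measurable_d0 trivial
  have hU : d0 ⁻¹' s ∩ T ⁻¹' E ∩ Set.Ioc (0:ℝ) 1 = ⋃ a : s, (piece a ∩ T ⁻¹' E) := by
    ext x
    simp only [Set.mem_inter_iff, Set.mem_preimage, Set.mem_iUnion]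
    constructor
    · rintro ⟨⟨h1, h2⟩, h3⟩
      exact ⟨⟨d0 x, h1⟩, mem_piece_d0 h3, h2⟩
    · rintro ⟨⟨a, ha⟩, h1, h2⟩
      have := d0_eq_of_mem_piece h1
      exact ⟨⟨this ▸ ha, h2⟩, piece_subset a h1⟩
  have e1 : μ (d0 ⁻¹' s ∩ T ⁻¹' E) = μ (⋃ a : s, (piece a ∩ T ⁻¹' E)) := by
    rw [← hU, μ, Measure.restrict_apply (hds.inter (measurable_T hE)),
        Measure.restrict_apply ((hds.inter (measurable_T hE)).inter measurableSet_Ioc)]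
    congr 1
    ext x
    simp only [Set.mem_inter_iff]
    tauto
  rw [e1, measure_iUnion
    (fun i j hij => ((piece_disjoint (fun h => hij (Subtype.ext h))).mono Set.inter_subset_left Set.inter_subset_left))
    (fun a => (measurableSet_piece a).inter (measurable_T hE))]
  simp_rw [key _ hE]
  rw [ENNReal.tsum_mul_right]

lemma meas_d0_preimage (s : Set ℕ+) :
    μ (d0 ⁻¹' s) = ∑' a : s, ENNReal.ofReal ((2:ℝ)^(-((a:ℕ+):ℤ))) := by
  have := key2 s MeasurableSet.univ
  simpa using this

lemma indepFun_d0_dig (m : ℕ) : ProbabilityTheory.IndepFun d0 (dig (m+1)) μ := by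
  rw [ProbabilityTheory.indepFun_iff_measure_inter_preimage_eq_mul]
  intro s t _ _
  have hdig : dig (m+1) ⁻¹' t = T ⁻¹' (dig m ⁻¹' t) := by
    ext x
    simp [dig, Function.iterate_succ_apply]
  have hE : MeasurableSet (dig m ⁻¹' t) := measurable_dig m trivial
  rw [hdig, key2 s hE, meas_d0_preimage,
    measurePreserving_T.measure_preimage hE.nullMeasurableSet]

lemma identDistrib_dig (k : ℕ) : ProbabilityTheory.IdentDistrib (dig k) (dig 0) μ μ := by
  refine ⟨(measurable_dig k).aemeasurable, (measurable_dig 0).aemeasurable, ?_⟩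
  have : dig k = d0 ∘ (T^[k]) := rfl
  rw [this, ← Measure.map_map measurable_d0 (measurable_T.iterate k),
      (measurePreserving_T.iterate k).map_eq]
  rfl

lemma indepFun_dig {i j : ℕ} (hij : i < j) : ProbabilityTheory.IndepFun (dig i) (dig j) μ := by
  rw [ProbabilityTheory.indepFun_iff_measure_inter_preimage_eq_mul]
  intro s t _ _
  obtain ⟨m, hm⟩ : ∃ m, j = (m+1) + i := ⟨j - i - 1, by omega⟩
  subst hm
  have h1 : dig i ⁻¹' s = T^[i] ⁻¹' (d0 ⁻¹' s) := rfl
  have h2 : dig ((m+1)+i) ⁻¹' t = T^[i] ⁻¹' (dig (m+1) ⁻¹' t) := by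
    ext x
    simp [dig, Function.iterate_add_apply]
  have hds : MeasurableSet (d0 ⁻¹' s) := measurable_d0 trivial
  have hdt : MeasurableSet (dig (m+1) ⁻¹' t) := measurable_dig (m+1) trivial
  have hiter := (measurePreserving_T.iterate i)
  rw [h1, h2, ← Set.preimage_inter,
    hiter.measure_preimage (hds.inter hdt).nullMeasurableSet,
    hiter.measure_preimage hds.nullMeasurableSet,
    hiter.measure_preimage hdt.nullMeasurableSet]
  exact (indepFun_d0_dig m).measure_inter_preimage_eq_mul s t trivial trivial

noncomputable def X (i : ℕ) (x : ℝ) : ℝ := Real.log ((dig i x : ℕ) : ℝ)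

noncomputable def glog : ℕ+ → ℝ := fun a => Real.log ((a : ℕ) : ℝ)

lemma map_d0_singleton (a : ℕ+) :
    (Measure.map d0 μ) {a} = ENNReal.ofReal ((2:ℝ)^(-(a:ℤ))) := by
  rw [Measure.map_apply measurable_d0 trivial, meas_d0_preimage]
  rw [tsum_eq_single (⟨a, rfl⟩ : ({a} : Set ℕ+)) (by rintro ⟨b, hb⟩ hba; simp at hb; subst hb; simp at hba)]

lemma summable_aux : Summable (fun a : ℕ+ => ((a:ℕ):ℝ) * (2:ℝ)^(-(a:ℤ))) := by
  rw [← Equiv.pnatEquivNat.symm.summable_iff]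
  have h : ∀ k : ℕ, (((Equiv.pnatEquivNat.symm k : ℕ+) : ℕ) : ℝ) * (2:ℝ)^(-((Equiv.pnatEquivNat.symm k : ℕ+):ℤ))
      = ((k:ℝ)+1) * ((2:ℝ)⁻¹)^(k+1) := by
    intro k
    have h1 : ((Equiv.pnatEquivNat.symm k : ℕ+) : ℕ) = k + 1 := rfl
    simp only [h1]
    rw [zpow_neg, zpow_natCast, ← inv_pow]
    push_cast
    ring
  apply (summable_congr h).mpr
  have hs1 : Summable (fun k : ℕ => (k:ℝ) * ((2:ℝ)⁻¹)^k) := by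
    have := summable_pow_mul_geometric_of_norm_lt_one (R := ℝ) 1 (r := (2:ℝ)⁻¹) (by norm_num)
    simpa using this
  have hs2 : Summable (fun k : ℕ => ((2:ℝ)⁻¹)^k) := summable_geometric_of_lt_one (by norm_num) (by norm_num)
  refine Summable.of_nonneg_of_le (g := fun k : ℕ => ((k:ℝ)+1) * ((2:ℝ)⁻¹)^(k+1))
    (f := fun k : ℕ => (k:ℝ) * ((2:ℝ)⁻¹)^k + ((2:ℝ)⁻¹)^k) (fun k => by positivity) ?_ (hs1.add hs2)
  intro k
  have hk : ((2:ℝ)⁻¹)^(k+1) ≤ ((2:ℝ)⁻¹)^k := by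
    apply pow_le_pow_of_le_one (by norm_num) (by norm_num)
    omega
  have hknn : (0:ℝ) ≤ (k:ℝ) := Nat.cast_nonneg k
  nlinarith [pow_nonneg (by norm_num : (0:ℝ) ≤ 2⁻¹) k, pow_nonneg (by norm_num : (0:ℝ) ≤ 2⁻¹) (k+1)]

lemma glog_le (a : ℕ+) : 0 ≤ glog a ∧ glog a ≤ ((a:ℕ):ℝ) := by
  have h1 : (1:ℝ) ≤ ((a:ℕ):ℝ) := by exact_mod_cast a.one_le
  constructor
  · exact Real.log_nonneg h1
  · have := Real.log_le_sub_one_of_pos (by linarith : (0:ℝ) < ((a:ℕ):ℝ))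
    simp only [glog]
    linarith

lemma integrable_X0 : Integrable (X 0) μ := by
  have hg : Measurable glog := Measurable.of_discrete
  have hX : X 0 = glog ∘ d0 := rfl
  rw [hX, ← integrable_map_measure (hg.aestronglyMeasurable) measurable_d0.aemeasurable]
  constructor
  · exact hg.aestronglyMeasurable
  · rw [HasFiniteIntegral, lintegral_countable']
    simp_rw [map_d0_singleton]
    have hb : ∀ a : ℕ+, ‖glog a‖₊ * ENNReal.ofReal ((2:ℝ)^(-(a:ℤ)))
        ≤ ENNReal.ofReal (((a:ℕ):ℝ) * (2:ℝ)^(-(a:ℤ))) := by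
      intro a
      rw [ENNReal.ofReal_mul (Nat.cast_nonneg _)]
      apply mul_le_mul_left
      rw [show ((‖glog a‖₊ : ℝ≥0∞)) = ENNReal.ofReal ‖glog a‖ from (ofReal_norm _).symm, Real.norm_of_nonneg (glog_le a).1]
      exact ENNReal.ofReal_le_ofReal (glog_le a).2
    calc (∑' a : ℕ+, ‖glog a‖₊ * ENNReal.ofReal ((2:ℝ)^(-(a:ℤ))))
        ≤ ∑' a : ℕ+, ENNReal.ofReal (((a:ℕ):ℝ) * (2:ℝ)^(-(a:ℤ))) := ENNReal.tsum_le_tsum hb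
      _ = ENNReal.ofReal (∑' a : ℕ+, ((a:ℕ):ℝ) * (2:ℝ)^(-(a:ℤ))) :=
          (ENNReal.ofReal_tsum_of_nonneg (fun a => by positivity) summable_aux).symm
      _ < ⊤ := ENNReal.ofReal_lt_top

noncomputable def Lconst : ℝ := ∑' a : ℕ+, (2:ℝ)^(-(a:ℤ)) * glog a

lemma integral_X0 : ∫ x, X 0 x ∂μ = Lconst := by
  have hg : Measurable glog := Measurable.of_discrete
  have hX : X 0 = glog ∘ d0 := rfl
  have hint : Integrable glog (Measure.map d0 μ) := by
    rw [integrable_map_measure (hg.aestronglyMeasurable) measurable_d0.aemeasurable]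
    exact integrable_X0
  rw [hX, show ∫ x, (glog ∘ d0) x ∂μ = ∫ x, glog (d0 x) ∂μ from rfl,
    ← integral_map measurable_d0.aemeasurable hg.aestronglyMeasurable,
    integral_countable' hint]
  rw [Lconst]
  congr 1
  funext a
  rw [measureReal_def, map_d0_singleton, ENNReal.toReal_ofReal (by positivity), smul_eq_mul]

lemma summable_L : Summable (fun a : ℕ+ => (2:ℝ)^(-(a:ℤ)) * glog a) := by
  refine Summable.of_nonneg_of_le
    (fun a => mul_nonneg (by positivity) (glog_le a).1) (fun a => ?_) summable_aux
  rw [mul_comm]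
  exact mul_le_mul_of_nonneg_right (glog_le a).2 (by positivity)

lemma hL_nat : Lconst = ∑' k : ℕ, ((2:ℝ)^(k+1))⁻¹ * Real.log ((k:ℝ)+1) := by
  rw [Lconst, ← Equiv.pnatEquivNat.symm.tsum_eq]
  congr 1
  funext k
  have h1 : ((Equiv.pnatEquivNat.symm k : ℕ+) : ℕ) = k + 1 := rfl
  simp only [glog, h1]
  rw [zpow_neg, zpow_natCast]
  push_cast
  ring_nf

lemma summable_nat_L : Summable (fun k : ℕ => ((2:ℝ)^(k+1))⁻¹ * Real.log ((k:ℝ)+1)) := by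
  have := (Equiv.pnatEquivNat.symm.summable_iff (f := fun a : ℕ+ => (2:ℝ)^(-(a:ℤ)) * glog a)).2 summable_L
  apply Summable.congr this
  intro k
  have h1 : ((Equiv.pnatEquivNat.symm k : ℕ+) : ℕ) = k + 1 := rfl
  simp only [Function.comp, glog, h1]
  rw [zpow_neg, zpow_natCast]
  push_cast
  ring_nf

lemma somos_eq : somos = Real.exp Lconst := by
  rw [hL_nat, somos]
  have hprod := (summable_nat_L.hasSum.rexp).tprod_eq
  rw [← hprod]
  congr 1
  funext i
  simp only [Function.comp]
  rw [Real.rpow_def_of_pos (by positivity)]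
  rw [mul_comm]

lemma slln : ∀ᵐ x ∂μ,
    Tendsto (fun n : ℕ => (∑ i ∈ Finset.range n, X i x) / n) atTop (𝓝 Lconst) := by
  have hind : Pairwise (Function.onFun (ProbabilityTheory.IndepFun · · μ) X) := by
    intro i j hij
    have : ∀ a b : ℕ, a < b → ProbabilityTheory.IndepFun (X a) (X b) μ := by
      intro a b hab
      exact (indepFun_dig hab).comp (Measurable.of_discrete (f := glog)) (Measurable.of_discrete (f := glog))
    rcases hij.lt_or_gt with h | h
    · exact this i j h
    · exact (this j i h).symm
  have hid : ∀ i, ProbabilityTheory.IdentDistrib (X i) (X 0) μ μ :=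
    fun i => (identDistrib_dig i).comp (Measurable.of_discrete (f := glog))
  have := ProbabilityTheory.strong_law_ae_real X integrable_X0 hind hid
  rwa [integral_X0] at this

lemma main_ae : ∀ᵐ x ∂μ,
    Tendsto (fun i : ℕ => (∏ k ∈ Finset.range i, ((dig k x : ℕ) : ℝ)) ^ ((i : ℝ)⁻¹))
      atTop (𝓝 somos) := by
  filter_upwards [slln] with x hx
  have h2 : Tendsto (fun n : ℕ => Real.exp ((∑ i ∈ Finset.range n, X i x) / n)) atTop
      (𝓝 (Real.exp Lconst)) := (Real.continuous_exp.continuousAt.tendsto.comp hx)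
  rw [somos_eq]
  apply h2.congr'
  filter_upwards [eventually_ge_atTop 1] with n hn
  have hpos : ∀ k ∈ Finset.range n, (0:ℝ) < ((dig k x : ℕ) : ℝ) := by
    intro k _
    exact_mod_cast (dig k x).pos
  have hprodpos : (0:ℝ) < ∏ k ∈ Finset.range n, ((dig k x : ℕ) : ℝ) :=
    Finset.prod_pos hpos
  rw [Real.rpow_def_of_pos hprodpos, Real.log_prod (fun k hk => (hpos k hk).ne')]
  congr 1

/- repVal lemmas -/

lemma S_ge (n : ℕ → ℕ+) (k : ℕ) : k + 1 ≤ ∑ j ∈ Finset.range (k + 1), (n j : ℕ) := by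
  calc k + 1 = ∑ _j ∈ Finset.range (k+1), 1 := by simp
    _ ≤ ∑ j ∈ Finset.range (k + 1), (n j : ℕ) :=
      Finset.sum_le_sum (fun j _ => (n j).one_le)

lemma summable_rep (n : ℕ → ℕ+) :
    Summable (fun k : ℕ => ((2:ℝ)⁻¹) ^ (∑ j ∈ Finset.range (k + 1), (n j : ℕ))) := by
  refine Summable.of_nonneg_of_le (fun k => by positivity) (fun k => ?_)
    (summable_geometric_of_lt_one (by norm_num) (by norm_num : (2:ℝ)⁻¹ < 1))
  exact pow_le_pow_of_le_one (by norm_num) (by norm_num) (by have := S_ge n k; omega)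

lemma pow_conv (m : ℕ) : (2:ℝ)^(-(m:ℤ)) = ((2:ℝ)⁻¹)^m := by
  rw [zpow_neg, zpow_natCast, inv_pow]

lemma repVal_mem_piece (n : ℕ → ℕ+) : repVal n ∈ piece (n 0) := by
  have hsum := summable_rep n
  have hsum1 : Summable (fun k : ℕ => ((2:ℝ)⁻¹) ^ (∑ j ∈ Finset.range (k + 1 + 1), (n j : ℕ))) :=
    ((summable_nat_add_iff (f := fun k : ℕ => ((2:ℝ)⁻¹) ^ (∑ j ∈ Finset.range (k + 1), (n j : ℕ))) 1).2 hsum : _)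
  have hsplit : repVal n = ((2:ℝ)⁻¹) ^ ((n 0 : ℕ))
      + ∑' k : ℕ, ((2:ℝ)⁻¹) ^ (∑ j ∈ Finset.range (k + 1 + 1), (n j : ℕ)) := by
    rw [repVal, Summable.tsum_eq_zero_add hsum, Finset.sum_range_one]
  have hgeo : ∑' k : ℕ, ((2:ℝ)⁻¹)^(k+1) = 1 := by
    simp_rw [pow_succ]
    rw [tsum_mul_right, tsum_geometric_of_lt_one (by norm_num) (by norm_num)]
    norm_num
  have htge : ∀ k : ℕ, ((2:ℝ)⁻¹) ^ (∑ j ∈ Finset.range (k + 1 + 1), (n j : ℕ))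
      ≤ ((2:ℝ)⁻¹) ^ ((n 0:ℕ)) * ((2:ℝ)⁻¹)^(k+1) := by
    intro k
    rw [← pow_add]
    apply pow_le_pow_of_le_one (by norm_num) (by norm_num)
    rw [Finset.sum_range_succ' (fun j => ((n j : ℕ))) (k+1)]
    have := S_ge (fun j => n (j+1)) k
    omega
  have htail_le : (∑' k : ℕ, ((2:ℝ)⁻¹) ^ (∑ j ∈ Finset.range (k + 1 + 1), (n j : ℕ)))
      ≤ ((2:ℝ)⁻¹) ^ ((n 0:ℕ)) := by
    calc (∑' k : ℕ, ((2:ℝ)⁻¹) ^ (∑ j ∈ Finset.range (k + 1 + 1), (n j : ℕ)))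
        ≤ ∑' k : ℕ, ((2:ℝ)⁻¹) ^ ((n 0:ℕ)) * ((2:ℝ)⁻¹)^(k+1) := by
          apply Summable.tsum_le_tsum htge hsum1
          exact (Summable.mul_left _ (((summable_nat_add_iff (f := fun k : ℕ => ((2:ℝ)⁻¹)^k) 1).2
            (summable_geometric_of_lt_one (by norm_num) (by norm_num))) : _))
      _ = ((2:ℝ)⁻¹) ^ ((n 0:ℕ)) := by rw [tsum_mul_left, hgeo, mul_one]
  have htail_pos : 0 < ∑' k : ℕ, ((2:ℝ)⁻¹) ^ (∑ j ∈ Finset.range (k + 1 + 1), (n j : ℕ)) :=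
    Summable.tsum_pos hsum1 (fun k => by positivity) 0 (by positivity)
  constructor
  · rw [pow_conv, hsplit]
    linarith
  · rw [show (1 - ((n 0:ℕ+):ℤ)) = -(((n 0:ℕ)):ℤ) + 1 by push_cast; ring,
      zpow_add₀ (two_ne_zero), pow_conv, zpow_one, hsplit]
    linarith

lemma T_repVal (n : ℕ → ℕ+) : T (repVal n) = repVal (fun k => n (k+1)) := by
  have hd : d0 (repVal n) = n 0 := d0_eq_of_mem_piece (repVal_mem_piece n)
  have hsum := summable_rep n
  rw [T, hd]
  have h1 : (2:ℝ) ^ ((n 0 : ℕ)) * repVal n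
      = ∑' k : ℕ, (2:ℝ)^((n 0:ℕ)) * ((2:ℝ)⁻¹) ^ (∑ j ∈ Finset.range (k + 1), (n j : ℕ)) := by
    rw [repVal, tsum_mul_left]
  rw [h1, Summable.tsum_eq_zero_add (hsum.mul_left _)]
  have h2 : (2:ℝ)^((n 0:ℕ)) * ((2:ℝ)⁻¹) ^ (∑ j ∈ Finset.range 1, (n j : ℕ)) = 1 := by
    rw [Finset.sum_range_one, ← mul_pow]
    norm_num
  have h3 : ∀ k:ℕ, (2:ℝ)^((n 0:ℕ)) * ((2:ℝ)⁻¹) ^ (∑ j ∈ Finset.range (k + 1 + 1), (n j : ℕ))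
      = ((2:ℝ)⁻¹)^(∑ j ∈ Finset.range (k+1), ((n (j+1) : ℕ))) := by
    intro k
    rw [Finset.sum_range_succ' (fun j => ((n j : ℕ))) (k+1), pow_add]
    rw [show (2:ℝ)^((n 0:ℕ)) * (((2:ℝ)⁻¹)^(∑ j ∈ Finset.range (k+1), ((n (j+1) : ℕ))) * ((2:ℝ)⁻¹)^((n 0:ℕ)))
        = ((2:ℝ)⁻¹)^(∑ j ∈ Finset.range (k+1), ((n (j+1) : ℕ))) * ((2:ℝ)*2⁻¹)^((n 0:ℕ)) by
      rw [mul_pow]; ring]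
    norm_num
  rw [h2, tsum_congr h3, repVal]
  ring

lemma dig_repVal (k : ℕ) : ∀ n : ℕ → ℕ+, dig k (repVal n) = n k := by
  induction k with
  | zero =>
    intro n
    show d0 (T^[0] (repVal n)) = n 0
    rw [Function.iterate_zero_apply]
    exact d0_eq_of_mem_piece (repVal_mem_piece n)
  | succ k ih =>
    intro n
    have hstep : dig (k+1) (repVal n) = dig k (T (repVal n)) := by
      simp [dig, Function.iterate_succ_apply]
    rw [hstep, T_repVal, ih]

end SomosAux


open SomosAux

/-- For almost all `x = ⟨n₁,n₂,…⟩ ∈ (0,1]`, the geometric mean of the digits tends to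
Somos' constant. -/
theorem somos_universal :
    ∀ᵐ x ∂(volume.restrict (Set.Ioc (0:ℝ) 1)),
      ∀ n : ℕ → ℕ+, x = repVal n →
        Tendsto (fun i : ℕ => (∏ k ∈ Finset.range i, ((n k : ℕ) : ℝ)) ^ ((i : ℝ)⁻¹))
          atTop (nhds somos) := by
  filter_upwards [main_ae] with x hx n hn
  subst hn
  have heq : (fun i : ℕ => (∏ k ∈ Finset.range i, ((n k : ℕ) : ℝ)) ^ ((i : ℝ)⁻¹))
      = fun i : ℕ => (∏ k ∈ Finset.range i, ((dig k (repVal n) : ℕ) : ℝ)) ^ ((i : ℝ)⁻¹) := by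
    funext i
    congr 1
    exact Finset.prod_congr rfl (fun k _ => by rw [dig_repVal k n])
  rw [heq]
  exact hx
end
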